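/- The fOU correlation function C_Z(s) satisfies, for H ∈ (0,1/2), the tail expansion C_Z(s) = s^{2H−2}/Γ(2H−1) + o(s^{2H−2}) as s → ∞; in particular C_Z is integrable on (0,∞). -/

import Mathlib

open MeasureTheory Real Filter Asymptotics Set

lemma fou_aux_rpow_bound {a : ℝ} (ha : 0 ≤ a) (ha1 : a ≤ 1) (s v : ℝ) :
    |s + v| ^ a ≤ (1 + |s|) * (1 + |v|) := by
  have hb : |s + v| ≤ (1 + |s|) * (1 + |v|) := by
    have := abs_add_le s v
    have h2 : (0:ℝ) ≤ |s| := abs_nonneg s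
    have h3 : (0:ℝ) ≤ |v| := abs_nonneg v
    nlinarith
  calc |s + v| ^ a ≤ ((1 + |s|) * (1 + |v|)) ^ a :=
        Real.rpow_le_rpow (abs_nonneg _) hb ha
    _ ≤ ((1 + |s|) * (1 + |v|)) ^ (1:ℝ) := by
        apply Real.rpow_le_rpow_of_exponent_le _ ha1
        nlinarith [abs_nonneg s, abs_nonneg v]
    _ = (1 + |s|) * (1 + |v|) := Real.rpow_one _


lemma fou_aux_integrable_base :
    Integrable (fun v : ℝ => Real.exp (-|v|) * (1 + |v|)) := by
  have h1 : IntegrableOn (fun v : ℝ => Real.exp (-|v|) * (1 + |v|)) (Ioi (0:ℝ)) := by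
    have hA : IntegrableOn (fun v : ℝ => Real.exp (-v)) (Ioi (0:ℝ)) := by
      simpa using exp_neg_integrableOn_Ioi (0:ℝ) (b := 1) one_pos
    have hB : IntegrableOn (fun v : ℝ => Real.exp (-v) * v) (Ioi (0:ℝ)) := by
      have := Real.GammaIntegral_convergent (s := 2) (by norm_num)
      refine this.congr_fun (fun x hx => ?_) measurableSet_Ioi
      norm_num [Real.rpow_one]
    have hAB : IntegrableOn (fun v : ℝ => Real.exp (-v) + Real.exp (-v) * v) (Ioi (0:ℝ)) :=
      hA.add hB
    refine hAB.congr_fun (fun x hx => ?_) measurableSet_Ioi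
    have hx0 : (0:ℝ) < x := hx
    rw [abs_of_pos hx0]; ring
  have h2 : IntegrableOn (fun v : ℝ => Real.exp (-|v|) * (1 + |v|)) (Iic (0:ℝ)) := by
    rw [← Measure.map_neg_eq_self (volume : Measure ℝ)]
    have m : MeasurableEmbedding fun x : ℝ => -x :=
      (Homeomorph.neg ℝ).measurableEmbedding
    rw [m.integrableOn_map_iff]
    simp only [Function.comp_def, abs_neg, neg_preimage, neg_Iic, neg_zero]
    exact (integrableOn_Ici_iff_integrableOn_Ioi).mpr h1
  have := h2.union h1
  rwa [Iic_union_Ioi, integrableOn_univ] at this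

lemma fou_aux_integrable_kernel {a : ℝ} (ha : 0 ≤ a) (ha1 : a ≤ 1) (s : ℝ) :
    Integrable (fun v : ℝ => Real.exp (-|v|) * |s + v| ^ a) := by
  have hcont : Continuous (fun v : ℝ => Real.exp (-|v|) * |s + v| ^ a) := by
    apply (continuous_abs.neg.rexp).mul
    exact ((continuous_const.add continuous_id).abs).rpow_const (fun x => Or.inr ha)
  refine (fou_aux_integrable_base.const_mul (1 + |s|)).mono'
    hcont.aestronglyMeasurable (ae_of_all _ fun v => ?_)
  have h1 : |s + v| ^ a ≤ (1 + |s|) * (1 + |v|) := by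
    have hb : |s + v| ≤ (1 + |s|) * (1 + |v|) := by
      have := abs_add_le s v
      have h2 : (0:ℝ) ≤ |s| := abs_nonneg s
      have h3 : (0:ℝ) ≤ |v| := abs_nonneg v
      nlinarith
    calc |s + v| ^ a ≤ ((1 + |s|) * (1 + |v|)) ^ a :=
          Real.rpow_le_rpow (abs_nonneg _) hb ha
      _ ≤ ((1 + |s|) * (1 + |v|)) ^ (1:ℝ) := by
          apply Real.rpow_le_rpow_of_exponent_le _ ha1
          nlinarith [abs_nonneg s, abs_nonneg v]
      _ = (1 + |s|) * (1 + |v|) := Real.rpow_one _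
  have hexp : (0:ℝ) < Real.exp (-|v|) := Real.exp_pos _
  rw [Real.norm_eq_abs, abs_mul, abs_of_pos hexp, abs_of_nonneg (Real.rpow_nonneg (abs_nonneg _) _)]
  calc Real.exp (-|v|) * |s + v| ^ a ≤ Real.exp (-|v|) * ((1 + |s|) * (1 + |v|)) := by
        exact mul_le_mul_of_nonneg_left h1 hexp.le
    _ = (1 + |s|) * (Real.exp (-|v|) * (1 + |v|)) := by ring

lemma fou_aux_fold {f : ℝ → ℝ} (hf : Integrable f) :
    (∫ v : ℝ, f v) = ∫ v in Ioi (0:ℝ), (f v + f (-v)) := by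
  have h1 : IntegrableOn f (Ioi (0:ℝ)) := hf.integrableOn
  have h2 : IntegrableOn (fun v : ℝ => f (-v)) (Ioi (0:ℝ)) := hf.comp_neg.integrableOn
  have hIic : IntegrableOn f (Iic (0:ℝ)) := hf.integrableOn
  have key : (∫ v in Iic (0:ℝ), f v) = ∫ v in Ioi (0:ℝ), f (-v) := by
    have := integral_comp_neg_Iic (0:ℝ) (fun x => f (-x))
    simp only [neg_neg, neg_zero] at this
    rw [this]
  calc (∫ v : ℝ, f v) = (∫ v in Iic (0:ℝ), f v) + ∫ v in Ioi (0:ℝ), f v := by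
        rw [← setIntegral_union (Iic_disjoint_Ioi le_rfl) measurableSet_Ioi hIic h1,
          Iic_union_Ioi, Measure.restrict_univ]
    _ = ∫ v in Ioi (0:ℝ), (f v + f (-v)) := by
        rw [key, ← integral_add h2 h1]
        exact integral_congr_ae (ae_of_all _ fun v => by ring)

lemma fou_aux_lhopital {a : ℝ} (ha : 0 < a) (ha1 : a < 1) :
    Tendsto (fun x : ℝ => ((1 + x) ^ a + (1 - x) ^ a - 2) / x ^ 2)
      (nhdsWithin 0 (Ioi 0)) (nhds (a * (a - 1))) := by
  have hIoo : Ioo (0:ℝ) 1 ∈ nhdsWithin (0:ℝ) (Ioi 0) :=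
    Ioo_mem_nhdsGT_of_mem (by constructor <;> norm_num)
  -- derivative helpers
  have hd1 : ∀ b : ℝ, ∀ x ∈ Ioo (0:ℝ) 1,
      HasDerivAt (fun y : ℝ => (1 + y) ^ b) (b * (1 + x) ^ (b - 1)) x := by
    intro b x hx
    have h1x : (0:ℝ) < 1 + x := by linarith [hx.1]
    have := (Real.hasDerivAt_rpow_const (x := 1 + x) (p := b)
      (Or.inl h1x.ne')).comp x ((hasDerivAt_id x).const_add 1)
    exact this.congr_deriv (by ring)
  have hd2 : ∀ b : ℝ, ∀ x ∈ Ioo (0:ℝ) 1,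
      HasDerivAt (fun y : ℝ => (1 - y) ^ b) (-(b * (1 - x) ^ (b - 1))) x := by
    intro b x hx
    have h2x : (0:ℝ) < 1 - x := by linarith [hx.2]
    have := (Real.hasDerivAt_rpow_const (x := 1 - x) (p := b)
      (Or.inl h2x.ne')).comp x ((hasDerivAt_id x).const_sub 1)
    exact this.congr_deriv (by ring)
  have hff' : ∀ x ∈ Ioo (0:ℝ) 1,
      HasDerivAt (fun y : ℝ => (1 + y) ^ a + (1 - y) ^ a - 2)
        (a * (1 + x) ^ (a - 1) - a * (1 - x) ^ (a - 1)) x := by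
    intro x hx
    have := ((hd1 a x hx).add (hd2 a x hx)).sub_const 2
    exact this.congr_deriv (by ring)
  have hff'' : ∀ x ∈ Ioo (0:ℝ) 1,
      HasDerivAt (fun y : ℝ => a * (1 + y) ^ (a - 1) - a * (1 - y) ^ (a - 1))
        (a * (a - 1) * (1 + x) ^ (a - 2) + a * (a - 1) * (1 - x) ^ (a - 2)) x := by
    intro x hx
    have h1 := (hd1 (a - 1) x hx).const_mul a
    have h2 := (hd2 (a - 1) x hx).const_mul a
    have := h1.sub h2
    have he : a - 1 - 1 = a - 2 := by ring
    rw [he] at this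
    exact this.congr_deriv (by ring)
  -- second l'hopital: f'/g' → a(a-1)
  have hdiv2 : Tendsto (fun x : ℝ =>
      (a * (a - 1) * (1 + x) ^ (a - 2) + a * (a - 1) * (1 - x) ^ (a - 2)) / 2)
      (nhdsWithin 0 (Ioi 0)) (nhds (a * (a - 1))) := by
    have hc : ContinuousAt (fun x : ℝ =>
        (a * (a - 1) * (1 + x) ^ (a - 2) + a * (a - 1) * (1 - x) ^ (a - 2)) / 2) 0 := by
      have c1 : ContinuousAt (fun x : ℝ => (1 + x) ^ (a - 2)) 0 :=
        ContinuousAt.rpow_const (continuousAt_const.add continuousAt_id) (by norm_num)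
      have c2 : ContinuousAt (fun x : ℝ => (1 - x) ^ (a - 2)) 0 :=
        ContinuousAt.rpow_const (continuousAt_const.sub continuousAt_id) (by norm_num)
      exact (((c1.const_mul _).add (c2.const_mul _)).div_const 2)
    have := hc.tendsto.mono_left (nhdsWithin_le_nhds (s := Ioi (0:ℝ)))
    convert this using 2
    norm_num [Real.one_rpow]
  have h2 : Tendsto (fun x : ℝ =>
      (a * (1 + x) ^ (a - 1) - a * (1 - x) ^ (a - 1)) / (2 * x))
      (nhdsWithin 0 (Ioi 0)) (nhds (a * (a - 1))) := by
    apply HasDerivAt.lhopital_zero_nhdsGT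
      (f' := fun x => a * (a - 1) * (1 + x) ^ (a - 2) + a * (a - 1) * (1 - x) ^ (a - 2))
      (g' := fun _ => (2:ℝ))
    · filter_upwards [hIoo] with x hx
      exact hff'' x hx
    · filter_upwards [hIoo] with x hx
      simpa using (hasDerivAt_id x).const_mul (2:ℝ)
    · filter_upwards [hIoo] with x hx
      norm_num
    · have hc : ContinuousAt (fun x : ℝ =>
          a * (1 + x) ^ (a - 1) - a * (1 - x) ^ (a - 1)) 0 := by
        have c1 : ContinuousAt (fun x : ℝ => (1 + x) ^ (a - 1)) 0 :=
          ContinuousAt.rpow_const (continuousAt_const.add continuousAt_id) (by norm_num)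
        have c2 : ContinuousAt (fun x : ℝ => (1 - x) ^ (a - 1)) 0 :=
          ContinuousAt.rpow_const (continuousAt_const.sub continuousAt_id) (by norm_num)
        exact (c1.const_mul _).sub (c2.const_mul _)
      have := hc.tendsto.mono_left (nhdsWithin_le_nhds (s := Ioi (0:ℝ)))
      convert this using 2
      norm_num [Real.one_rpow]
    · have : Tendsto (fun x : ℝ => 2 * x) (nhdsWithin (0:ℝ) (Ioi 0)) (nhds (2 * 0)) :=
        (continuousAt_const.mul continuousAt_id).tendsto.mono_left (nhdsWithin_le_nhds (s := Ioi (0:ℝ)))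
      simpa using this
    · exact hdiv2
  -- first l'hopital
  apply HasDerivAt.lhopital_zero_nhdsGT
    (f' := fun x => a * (1 + x) ^ (a - 1) - a * (1 - x) ^ (a - 1))
    (g' := fun x => 2 * x)
  · filter_upwards [hIoo] with x hx
    exact hff' x hx
  · filter_upwards [hIoo] with x hx
    simpa using hasDerivAt_pow 2 x
  · filter_upwards [self_mem_nhdsWithin] with x hx
    have : (0:ℝ) < x := hx
    positivity
  · have hc : ContinuousAt (fun x : ℝ => (1 + x) ^ a + (1 - x) ^ a - 2) 0 := by
      have c1 : ContinuousAt (fun x : ℝ => (1 + x) ^ a) 0 :=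
        ContinuousAt.rpow_const (continuousAt_const.add continuousAt_id) (by norm_num)
      have c2 : ContinuousAt (fun x : ℝ => (1 - x) ^ a) 0 :=
        ContinuousAt.rpow_const (continuousAt_const.sub continuousAt_id) (by norm_num)
      exact (c1.add c2).sub continuousAt_const
    have := hc.tendsto.mono_left (nhdsWithin_le_nhds (s := Ioi (0:ℝ)))
    convert this using 2
    norm_num [Real.one_rpow]
  · have : Tendsto (fun x : ℝ => x ^ 2) (nhdsWithin (0:ℝ) (Ioi 0)) (nhds ((0:ℝ) ^ 2)) :=
      (continuous_pow 2).continuousAt.tendsto.mono_left (nhdsWithin_le_nhds (s := Ioi (0:ℝ)))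
    simpa using this
  · exact h2

lemma fou_aux_quadbound {a : ℝ} (ha : 0 < a) (ha1 : a < 1) {x : ℝ} (hx : 0 ≤ x) :
    |(1 + x) ^ a + |1 - x| ^ a - 2| ≤ 20 * x ^ 2 := by
  rcases le_or_gt x (1/2) with hle | hgt
  · -- Taylor / MVT regime
    set D : ℝ → ℝ := fun t => (1 + t) ^ a + (1 - t) ^ a - 2 with hD
    set D' : ℝ → ℝ := fun t => a * (1 + t) ^ (a - 1) - a * (1 - t) ^ (a - 1) with hD'
    have habs : ∀ t ∈ Icc (0:ℝ) (1/2), |1 - t| = 1 - t := fun t ht =>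
      abs_of_nonneg (by linarith [ht.2])
    have hd1 : ∀ b : ℝ, ∀ t ∈ Icc (0:ℝ) (1/2),
        HasDerivAt (fun y : ℝ => (1 + y) ^ b) (b * (1 + t) ^ (b - 1)) t := by
      intro b t ht
      have h1t : (0:ℝ) < 1 + t := by linarith [ht.1]
      have := (Real.hasDerivAt_rpow_const (x := 1 + t) (p := b)
        (Or.inl h1t.ne')).comp t ((hasDerivAt_id t).const_add 1)
      exact this.congr_deriv (by ring)
    have hd2 : ∀ b : ℝ, ∀ t ∈ Icc (0:ℝ) (1/2),
        HasDerivAt (fun y : ℝ => (1 - y) ^ b) (-(b * (1 - t) ^ (b - 1))) t := by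
      intro b t ht
      have h2t : (0:ℝ) < 1 - t := by linarith [ht.2]
      have := (Real.hasDerivAt_rpow_const (x := 1 - t) (p := b)
        (Or.inl h2t.ne')).comp t ((hasDerivAt_id t).const_sub 1)
      exact this.congr_deriv (by ring)
    -- |D'(t)| ≤ (5/4) t on Icc 0 (1/2)
    have hstep1 : ∀ t ∈ Icc (0:ℝ) (1/2), |D' t| ≤ (5/4) * t := by
      intro t ht
      have hmvt := (convex_Icc (0:ℝ) (1/2)).norm_image_sub_le_of_norm_hasDerivWithin_le
        (f := D') (f' := fun u => a * (a - 1) * (1 + u) ^ (a - 2)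
          + a * (a - 1) * (1 - u) ^ (a - 2)) (C := 5/4) (x := 0) (y := t)
        (fun u hu => by
          have h1 := (hd1 (a - 1) u hu).const_mul a
          have h2 := (hd2 (a - 1) u hu).const_mul a
          have h3 := h1.sub h2
          have he : a - 1 - 1 = a - 2 := by ring
          rw [he] at h3
          have : HasDerivAt D' (a * (a - 1) * (1 + u) ^ (a - 2)
              + a * (a - 1) * (1 - u) ^ (a - 2)) u := by
            exact h3.congr_deriv (by ring)
          exact this.hasDerivWithinAt)
        (fun u hu => by
          have h1u : (0:ℝ) < 1 + u := by linarith [hu.1]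
          have h2u : (0:ℝ) < 1 - u := by linarith [hu.2]
          have e1 : (1 + u) ^ (a - 2) ≤ 1 :=
            Real.rpow_le_one_of_one_le_of_nonpos (by linarith [hu.1]) (by linarith)
          have e2 : (1 - u) ^ (a - 2) ≤ 4 := by
            have k1 : (1 - u) ^ (a - 2) ≤ (1/2 : ℝ) ^ (a - 2) :=
              Real.rpow_le_rpow_of_nonpos (by norm_num) (by linarith [hu.2]) (by linarith)
            have k2 : (1/2 : ℝ) ^ (a - 2) ≤ (1/2 : ℝ) ^ (-2 : ℝ) :=
              Real.rpow_le_rpow_of_exponent_ge (by norm_num) (by norm_num) (by linarith)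
            have k3 : (1/2 : ℝ) ^ (-2 : ℝ) = 4 := by
              rw [Real.rpow_neg (by norm_num)]
              norm_num
            linarith
          have hpos1 : (0:ℝ) ≤ (1 + u) ^ (a - 2) := Real.rpow_nonneg h1u.le _
          have hpos2 : (0:ℝ) ≤ (1 - u) ^ (a - 2) := Real.rpow_nonneg h2u.le _
          have haa : |a * (a - 1)| ≤ 1/4 := by
            rw [abs_mul, abs_of_pos ha, abs_of_neg (by linarith)]
            nlinarith [sq_nonneg (a - 1/2)]
          have b1 : |a * (a - 1) * (1 + u) ^ (a - 2)| ≤ 1/4 := by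
            rw [abs_mul, abs_of_nonneg hpos1]
            nlinarith [abs_nonneg (a * (a-1))]
          have b2 : |a * (a - 1) * (1 - u) ^ (a - 2)| ≤ 1 := by
            rw [abs_mul, abs_of_nonneg hpos2]
            nlinarith [abs_nonneg (a * (a-1))]
          rw [Real.norm_eq_abs]
          refine le_trans (abs_add_le _ _) ?_
          linarith)
        (left_mem_Icc.mpr (by norm_num)) ht
      have hD'0 : D' 0 = 0 := by simp [hD', Real.one_rpow]
      rw [hD'0] at hmvt
      simpa [Real.norm_eq_abs, abs_of_nonneg ht.1] using hmvt
    -- |D x| ≤ (5/4) x^2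
    have hsub : Icc (0:ℝ) x ⊆ Icc (0:ℝ) (1/2) := Icc_subset_Icc le_rfl hle
    have hstep2 := (convex_Icc (0:ℝ) x).norm_image_sub_le_of_norm_hasDerivWithin_le
      (f := D) (f' := D') (C := (5/4) * x)
      (fun u hu => by
        have hu' := hsub hu
        have h1 := hd1 a u hu'
        have h2 := hd2 a u hu'
        have : HasDerivAt D (D' u) u := by
          have := (h1.add h2).sub_const 2
          exact this.congr_deriv (by ring)
        exact this.hasDerivWithinAt)
      (fun u hu => by
        have hu' := hsub hu
        have := hstep1 u hu'
        rw [Real.norm_eq_abs]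
        calc |D' u| ≤ (5/4) * u := this
          _ ≤ (5/4) * x := by nlinarith [hu.2])
      (left_mem_Icc.mpr hx) (right_mem_Icc.mpr hx)
    have hD0 : D 0 = 0 := by norm_num [hD, Real.one_rpow]
    rw [hD0] at hstep2
    have habs' : |1 - x| = 1 - x := abs_of_nonneg (by linarith)
    rw [habs']
    have : |D x| ≤ (5/4) * x * x := by
      simpa [Real.norm_eq_abs, abs_of_nonneg hx] using hstep2
    have : |D x| ≤ 20 * x ^ 2 := by nlinarith [abs_nonneg (D x), sq_nonneg x]
    simpa [hD] using this
  · -- crude regime x > 1/2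
    have h1 : (1 + x) ^ a ≤ 1 + x := by
      calc (1 + x) ^ a ≤ (1 + x) ^ (1:ℝ) :=
            Real.rpow_le_rpow_of_exponent_le (by linarith) ha1.le
        _ = 1 + x := Real.rpow_one _
    have h2 : |1 - x| ^ a ≤ 1 + x := by
      rcases le_or_gt (|1 - x|) 1 with h | h
      · calc |1 - x| ^ a ≤ 1 := Real.rpow_le_one (abs_nonneg _) h ha.le
          _ ≤ 1 + x := by linarith
      · calc |1 - x| ^ a ≤ |1 - x| ^ (1:ℝ) :=
            Real.rpow_le_rpow_of_exponent_le h.le ha1.le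
          _ = |1 - x| := Real.rpow_one _
          _ ≤ 1 + x := by
            rcases abs_cases (1 - x) with ⟨he, _⟩ | ⟨he, _⟩ <;> rw [he] <;> linarith
    have hp1 : (0:ℝ) ≤ (1 + x) ^ a := Real.rpow_nonneg (by linarith) _
    have hp2 : (0:ℝ) ≤ |1 - x| ^ a := Real.rpow_nonneg (abs_nonneg _) _
    rw [abs_le]
    constructor <;> nlinarith [sq_nonneg (x - 1/2)]

lemma fou_aux_scaling {a s v : ℝ} (hs : 0 < s) (hv : 0 ≤ v) :
    s ^ ((2:ℝ) - a) * ((s + v) ^ a + |s - v| ^ a - 2 * s ^ a)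
      = s ^ 2 * ((1 + v/s) ^ a + |1 - v/s| ^ a - 2) := by
  have h1 : (s + v) ^ a = s ^ a * (1 + v/s) ^ a := by
    rw [← Real.mul_rpow hs.le (by positivity)]
    congr 1
    field_simp
  have h2 : |s - v| ^ a = s ^ a * |1 - v/s| ^ a := by
    rw [← Real.mul_rpow hs.le (abs_nonneg _)]
    congr 1
    rw [← abs_of_pos hs, ← abs_mul, abs_of_pos hs]
    congr 1
    field_simp
  have h3 : s ^ ((2:ℝ) - a) * s ^ a = s ^ 2 := by
    rw [← Real.rpow_add hs]
    norm_num
  calc s ^ ((2:ℝ) - a) * ((s + v) ^ a + |s - v| ^ a - 2 * s ^ a)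
      = (s ^ ((2:ℝ) - a) * s ^ a) * ((1 + v/s) ^ a + |1 - v/s| ^ a - 2) := by
        rw [h1, h2]; ring
    _ = s ^ 2 * ((1 + v/s) ^ a + |1 - v/s| ^ a - 2) := by rw [h3]

lemma fou_aux_ptlim {a : ℝ} (ha : 0 < a) (ha1 : a < 1) {v : ℝ} (hv : 0 < v) :
    Tendsto (fun s : ℝ =>
        Real.exp (-v) * (s ^ ((2:ℝ) - a) * ((s + v) ^ a + |s - v| ^ a - 2 * s ^ a)))
      atTop (nhds (Real.exp (-v) * (a * (a - 1) * v ^ 2))) := by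
  have hx : Tendsto (fun s : ℝ => v / s) atTop (nhdsWithin 0 (Ioi 0)) := by
    rw [tendsto_nhdsWithin_iff]
    constructor
    · exact tendsto_const_nhds.div_atTop tendsto_id
    · filter_upwards [eventually_gt_atTop 0] with s hs
      exact div_pos hv hs
  have h2 := (fou_aux_lhopital ha ha1).comp hx
  have h3 := (h2.const_mul (v ^ 2)).const_mul (Real.exp (-v))
  have heq : ∀ᶠ s : ℝ in atTop,
      Real.exp (-v) * (v ^ 2 * (((1 + v/s) ^ a + (1 - v/s) ^ a - 2) / (v/s) ^ 2))
        = Real.exp (-v) * (s ^ ((2:ℝ) - a) * ((s + v) ^ a + |s - v| ^ a - 2 * s ^ a)) := by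
    filter_upwards [eventually_gt_atTop (max v 0)] with s hs
    have hs0 : (0:ℝ) < s := lt_of_le_of_lt (le_max_right v 0) hs
    have hsv : v < s := lt_of_le_of_lt (le_max_left v 0) hs
    have hlt1 : v / s < 1 := (div_lt_one hs0).mpr hsv
    have habs : |1 - v/s| = 1 - v/s := abs_of_nonneg (by linarith)
    rw [fou_aux_scaling hs0 hv.le, habs]
    have hvs : (0:ℝ) < v / s := div_pos hv hs0
    field_simp
  have := h3.congr' heq
  convert this using 2
  ring
lemma fou_aux_dct {a : ℝ} (ha : 0 < a) (ha1 : a < 1) :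
    Tendsto (fun s : ℝ => ∫ v in Ioi (0:ℝ),
        Real.exp (-v) * (s ^ ((2:ℝ) - a) * ((s + v) ^ a + |s - v| ^ a - 2 * s ^ a)))
      atTop (nhds (2 * (a * (a - 1)))) := by
  have hgamma3 : Real.Gamma 3 = 2 := by
    rw [show (3:ℝ) = ((2:ℕ):ℝ) + 1 by norm_num, Real.Gamma_nat_eq_factorial]
    norm_num
  have hint2 : (∫ v in Ioi (0:ℝ), Real.exp (-v) * v ^ 2) = 2 := by
    calc (∫ v in Ioi (0:ℝ), Real.exp (-v) * v ^ 2)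
        = ∫ x in Ioi (0:ℝ), Real.exp (-x) * x ^ ((3:ℝ) - 1) := by
          refine setIntegral_congr_fun measurableSet_Ioi (fun x hx => ?_)
          rw [show (3:ℝ) - 1 = ((2:ℕ):ℝ) by norm_num, Real.rpow_natCast]
      _ = Real.Gamma 3 := (Real.Gamma_eq_integral (by norm_num)).symm
      _ = 2 := hgamma3
  have hval : (∫ v in Ioi (0:ℝ), Real.exp (-v) * (a * (a - 1) * v ^ 2))
      = 2 * (a * (a - 1)) := by
    have h : ∀ v : ℝ, Real.exp (-v) * (a * (a - 1) * v ^ 2)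
        = (a * (a - 1)) * (Real.exp (-v) * v ^ 2) := fun v => by ring
    simp_rw [h]
    rw [MeasureTheory.integral_const_mul, hint2]
    ring
  have hbound_int : IntegrableOn (fun v : ℝ => 20 * v ^ 2 * Real.exp (-v)) (Ioi 0) := by
    have h20 : IntegrableOn (fun x : ℝ => 20 * (Real.exp (-x) * x ^ ((3:ℝ) - 1))) (Ioi 0) :=
      (Real.GammaIntegral_convergent (s := 3) (by norm_num)).const_mul 20
    refine h20.congr_fun (fun x hx => ?_) measurableSet_Ioi
    dsimp only
    rw [show (3:ℝ) - 1 = ((2:ℕ):ℝ) by norm_num, Real.rpow_natCast]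
    ring
  have key := MeasureTheory.tendsto_integral_filter_of_dominated_convergence
    (μ := volume.restrict (Ioi (0:ℝ))) (l := atTop)
    (F := fun (s : ℝ) (v : ℝ) =>
      Real.exp (-v) * (s ^ ((2:ℝ) - a) * ((s + v) ^ a + |s - v| ^ a - 2 * s ^ a)))
    (f := fun v : ℝ => Real.exp (-v) * (a * (a - 1) * v ^ 2))
    (bound := fun v : ℝ => 20 * v ^ 2 * Real.exp (-v))
    (by
      filter_upwards with s
      apply Continuous.aestronglyMeasurable
      apply (continuous_id.neg.rexp).mul
      apply continuous_const.mul
      apply Continuous.sub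
      apply Continuous.add
      · exact ((continuous_const.add continuous_id).rpow_const (fun x => Or.inr ha.le))
      · exact (((continuous_const.sub continuous_id).abs).rpow_const (fun x => Or.inr ha.le))
      · exact continuous_const.mul continuous_const)
    (by
      filter_upwards [eventually_gt_atTop 0] with s hs
      rw [ae_restrict_iff' measurableSet_Ioi]
      refine ae_of_all _ (fun v hv => ?_)
      have hv0 : (0:ℝ) < v := hv
      have hvs : (0:ℝ) ≤ v / s := (div_pos hv0 hs).le
      rw [Real.norm_eq_abs, fou_aux_scaling hs hv0.le, abs_mul, abs_mul,
        abs_of_pos (Real.exp_pos _), abs_of_nonneg (sq_nonneg s)]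
      have hq := fou_aux_quadbound ha ha1 hvs
      calc Real.exp (-v) * (s ^ 2 * |(1 + v/s) ^ a + |1 - v/s| ^ a - 2|)
          ≤ Real.exp (-v) * (s ^ 2 * (20 * (v/s) ^ 2)) := by
            apply mul_le_mul_of_nonneg_left _ (Real.exp_pos _).le
            exact mul_le_mul_of_nonneg_left hq (sq_nonneg s)
        _ = 20 * v ^ 2 * Real.exp (-v) := by
            field_simp)
    hbound_int
    (by
      rw [ae_restrict_iff' measurableSet_Ioi]
      exact ae_of_all _ (fun v hv => fou_aux_ptlim ha ha1 hv))
  rwa [hval] at key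

/-- Correlation function of the stationary fractional Ornstein-Uhlenbeck process. -/
noncomputable def fouCorr (H : ℝ) (s : ℝ) : ℝ :=
  (Real.Gamma (2 * H + 1))⁻¹
    * ((1 / 2) * (∫ v : ℝ, Real.exp (-|v|) * |s + v| ^ (2 * H)) - s ^ (2 * H))

lemma fou_aux_key {a : ℝ} (ha : 0 < a) (ha1 : a < 1) {s : ℝ} (hs : 0 < s) :
    (1/2 : ℝ) * (∫ v : ℝ, Real.exp (-|v|) * |s + v| ^ a) - s ^ a
      = (1/2 : ℝ) * ∫ v in Ioi (0:ℝ),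
          Real.exp (-v) * ((s + v) ^ a + |s - v| ^ a - 2 * s ^ a) := by
  have hker := fou_aux_integrable_kernel ha.le ha1.le s
  have h1 : IntegrableOn (fun v : ℝ => Real.exp (-|v|) * |s + v| ^ a) (Ioi 0) :=
    hker.integrableOn
  have h2 : IntegrableOn (fun v : ℝ => Real.exp (-|(-v)|) * |s + -v| ^ a) (Ioi 0) :=
    hker.comp_neg.integrableOn
  have he : IntegrableOn (fun v : ℝ => Real.exp (-v)) (Ioi (0:ℝ)) := by
    simpa using exp_neg_integrableOn_Ioi (0:ℝ) (b := 1) one_pos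
  have hfold := fou_aux_fold hker
  have hsplit : (∫ v in Ioi (0:ℝ),
        ((Real.exp (-|v|) * |s + v| ^ a + Real.exp (-|(-v)|) * |s + -v| ^ a)
          - 2 * s ^ a * Real.exp (-v)))
      = (∫ v in Ioi (0:ℝ),
          (Real.exp (-|v|) * |s + v| ^ a + Real.exp (-|(-v)|) * |s + -v| ^ a))
        - ∫ v in Ioi (0:ℝ), 2 * s ^ a * Real.exp (-v) :=
    integral_sub (h1.add h2) (he.const_mul _)
  have hconst : (∫ v in Ioi (0:ℝ), 2 * s ^ a * Real.exp (-v)) = 2 * s ^ a := by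
    rw [MeasureTheory.integral_const_mul, integral_exp_neg_Ioi_zero, mul_one]
  have hcong : (∫ v in Ioi (0:ℝ), Real.exp (-v) * ((s + v) ^ a + |s - v| ^ a - 2 * s ^ a))
      = ∫ v in Ioi (0:ℝ),
        ((Real.exp (-|v|) * |s + v| ^ a + Real.exp (-|(-v)|) * |s + -v| ^ a)
          - 2 * s ^ a * Real.exp (-v)) := by
    refine setIntegral_congr_fun measurableSet_Ioi (fun v hv => ?_)
    have hv0 : (0:ℝ) < v := hv
    rw [abs_of_pos hv0, abs_neg, abs_of_pos hv0, abs_of_pos (by linarith : (0:ℝ) < s + v),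
      show s + -v = s - v by ring]
    ring
  rw [hfold, hcong, hsplit, hconst]
  ring

lemma fou_aux_continuous {H : ℝ} (hH0 : 0 < H) (hH1 : H < 1/2) :
    Continuous (fouCorr H) := by
  have ha : (0:ℝ) < 2 * H := by linarith
  have hI : Continuous (fun s : ℝ => ∫ v : ℝ, Real.exp (-|v|) * |s + v| ^ (2 * H)) := by
    rw [continuous_iff_continuousAt]
    intro s₀
    apply continuousAt_of_dominated (bound := fun v : ℝ => (2 + |s₀|) * (Real.exp (-|v|) * (1 + |v|)))
    · filter_upwards with s
      apply Continuous.aestronglyMeasurable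
      exact (continuous_abs.neg.rexp).mul
        (((continuous_const.add continuous_id).abs).rpow_const (fun x => Or.inr ha.le))
    · filter_upwards [Metric.ball_mem_nhds s₀ one_pos] with s hs
      refine ae_of_all _ (fun v => ?_)
      have hds : |s - s₀| < 1 := by
        rw [Metric.mem_ball, Real.dist_eq] at hs; exact hs
      have hsabs : |s| ≤ 1 + |s₀| := by
        have := abs_sub_abs_le_abs_sub s s₀
        linarith
      have hb := fou_aux_rpow_bound ha.le (by linarith : 2 * H ≤ 1) s v
      have hexp : (0:ℝ) < Real.exp (-|v|) := Real.exp_pos _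
      rw [Real.norm_eq_abs, abs_mul, abs_of_pos hexp,
        abs_of_nonneg (Real.rpow_nonneg (abs_nonneg _) _)]
      have hv1 : (0:ℝ) ≤ 1 + |v| := by linarith [abs_nonneg v]
      calc Real.exp (-|v|) * |s + v| ^ (2 * H)
          ≤ Real.exp (-|v|) * ((1 + |s|) * (1 + |v|)) :=
            mul_le_mul_of_nonneg_left hb hexp.le
        _ = (1 + |s|) * (Real.exp (-|v|) * (1 + |v|)) := by ring
        _ ≤ (2 + |s₀|) * (Real.exp (-|v|) * (1 + |v|)) := by
            apply mul_le_mul_of_nonneg_right (by linarith) (by positivity)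
    · exact fou_aux_integrable_base.const_mul _
    · refine ae_of_all _ (fun v => ?_)
      exact continuousAt_const.mul
        (ContinuousAt.rpow_const ((continuousAt_id.add continuousAt_const).abs)
          (Or.inr ha.le))
  have hpow : Continuous (fun s : ℝ => s ^ (2 * H)) := by
    rw [continuous_iff_continuousAt]
    intro x
    exact Real.continuousAt_rpow_const x (2 * H) (Or.inr ha.le)
  exact continuous_const.mul ((continuous_const.mul hI).sub hpow)

lemma fou_aux_ratio {H : ℝ} (hH0 : 0 < H) (hH1 : H < 1/2) :
    Tendsto (fun s : ℝ =>
        (fouCorr H s - s ^ (2 * H - 2) / Real.Gamma (2 * H - 1)) / s ^ (2 * H - 2))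
      atTop (nhds 0) := by
  have ha : (0:ℝ) < 2 * H := by linarith
  have ha1 : 2 * H < 1 := by linarith
  have hΓ1 : Real.Gamma (2 * H + 1) ≠ 0 := (Real.Gamma_pos_of_pos (by linarith)).ne'
  have hΓ2 : Real.Gamma (2 * H - 1) ≠ 0 := by
    apply Real.Gamma_ne_zero
    intro m
    rcases Nat.eq_zero_or_pos m with hm | hm
    · subst hm; simp; linarith
    · have h1 : (1:ℝ) ≤ (m:ℝ) := by exact_mod_cast hm
      intro hc
      have : (2 * H - 1 : ℝ) = -(m:ℝ) := hc
      linarith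
  have hGam : Real.Gamma (2 * H + 1) = 2 * H * ((2 * H - 1) * Real.Gamma (2 * H - 1)) := by
    rw [Real.Gamma_add_one ha.ne']
    congr 1
    rw [show 2 * H = (2 * H - 1) + 1 by ring, Real.Gamma_add_one (by linarith)]
    ring_nf
  have hdct := fou_aux_dct ha ha1
  have hT : Tendsto (fun s : ℝ => (Real.Gamma (2 * H + 1))⁻¹
      * ((1/2 : ℝ) * (∫ v in Ioi (0:ℝ), Real.exp (-v) *
          (s ^ ((2:ℝ) - 2 * H) * ((s + v) ^ (2 * H) + |s - v| ^ (2 * H) - 2 * s ^ (2 * H))))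
        - 2 * H * (2 * H - 1))) atTop (nhds 0) := by
    have := ((hdct.const_mul (1/2 : ℝ)).sub_const (2 * H * (2 * H - 1))).const_mul
      (Real.Gamma (2 * H + 1))⁻¹
    convert this using 2
    ring
  refine hT.congr' ?_
  filter_upwards [eventually_gt_atTop 0] with s hs
  have hr : s ^ (2 * H - 2) ≠ 0 := (Real.rpow_pos_of_pos hs _).ne'
  have hx : s ^ ((2:ℝ) - 2 * H) * s ^ (2 * H - 2) = 1 := by
    rw [← Real.rpow_add hs]
    norm_num
  have hkey := fou_aux_key ha ha1 hs
  have hpull : (∫ v in Ioi (0:ℝ), Real.exp (-v) *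
      (s ^ ((2:ℝ) - 2 * H) * ((s + v) ^ (2 * H) + |s - v| ^ (2 * H) - 2 * s ^ (2 * H))))
      = s ^ ((2:ℝ) - 2 * H) * ∫ v in Ioi (0:ℝ),
          Real.exp (-v) * ((s + v) ^ (2 * H) + |s - v| ^ (2 * H) - 2 * s ^ (2 * H)) := by
    rw [← MeasureTheory.integral_const_mul]
    refine setIntegral_congr_fun measurableSet_Ioi (fun v _ => ?_)
    ring
  set K := ∫ v in Ioi (0:ℝ),
      Real.exp (-v) * ((s + v) ^ (2 * H) + |s - v| ^ (2 * H) - 2 * s ^ (2 * H)) with hK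
  rw [hpull]
  have hfc : fouCorr H s = (Real.Gamma (2 * H + 1))⁻¹ * ((1/2 : ℝ) * K) := by
    rw [fouCorr, hkey]
  have hinv : (Real.Gamma (2 * H + 1))⁻¹ * (2 * H * (2 * H - 1))
      = (Real.Gamma (2 * H - 1))⁻¹ := by
    rw [hGam]
    have hne1 : (2 * H : ℝ) ≠ 0 := ha.ne'
    have hne2 : (2 * H - 1 : ℝ) ≠ 0 := by linarith
    field_simp
  rw [hfc, eq_div_iff hr]
  calc (Real.Gamma (2 * H + 1))⁻¹
        * ((1/2 : ℝ) * (s ^ ((2:ℝ) - 2 * H) * K) - 2 * H * (2 * H - 1)) * s ^ (2 * H - 2)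
      = (Real.Gamma (2 * H + 1))⁻¹ * ((1/2 : ℝ) * K) * (s ^ ((2:ℝ) - 2 * H) * s ^ (2 * H - 2))
        - ((Real.Gamma (2 * H + 1))⁻¹ * (2 * H * (2 * H - 1))) * s ^ (2 * H - 2) := by ring
    _ = (Real.Gamma (2 * H + 1))⁻¹ * ((1/2 : ℝ) * K) * 1
        - (Real.Gamma (2 * H - 1))⁻¹ * s ^ (2 * H - 2) := by rw [hx, hinv]
    _ = (Real.Gamma (2 * H + 1))⁻¹ * ((1/2 : ℝ) * K) - s ^ (2 * H - 2) / Real.Gamma (2 * H - 1) := by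
        rw [div_eq_mul_inv]; ring

/-- for `H ∈ (0,1/2)`, the fOU correlation function satisfies the tail
expansion `C_Z(s) = s^{2H-2}/Γ(2H-1) + o(s^{2H-2})` as `s → ∞`; in particular it is
integrable on `(0,∞)`. -/
theorem fou_correlation_tail (H : ℝ) (hH : H ∈ Set.Ioo (0 : ℝ) (1/2)) :
    ((fun s : ℝ => fouCorr H s - s ^ (2 * H - 2) / Real.Gamma (2 * H - 1))
        =o[atTop] fun s : ℝ => s ^ (2 * H - 2)) ∧
      IntegrableOn (fouCorr H) (Set.Ioi (0 : ℝ)) := by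
  obtain ⟨hH0, hH1⟩ := hH
  have hlittle : (fun s : ℝ => fouCorr H s - s ^ (2 * H - 2) / Real.Gamma (2 * H - 1))
      =o[atTop] fun s : ℝ => s ^ (2 * H - 2) := by
    rw [Asymptotics.isLittleO_iff]
    intro c hc
    have hball := (fou_aux_ratio hH0 hH1) (Metric.ball_mem_nhds (0:ℝ) hc)
    filter_upwards [hball, eventually_gt_atTop 0] with s h1 h2
    have hd : s ^ (2 * H - 2) ≠ 0 := (Real.rpow_pos_of_pos h2 _).ne'
    have hratio : |(fouCorr H s - s ^ (2 * H - 2) / Real.Gamma (2 * H - 1))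
        / s ^ (2 * H - 2)| < c := by
      rw [Set.mem_preimage, Metric.mem_ball, Real.dist_eq, sub_zero] at h1
      exact h1
    rw [Real.norm_eq_abs, Real.norm_eq_abs]
    calc |fouCorr H s - s ^ (2 * H - 2) / Real.Gamma (2 * H - 1)|
        = |(fouCorr H s - s ^ (2 * H - 2) / Real.Gamma (2 * H - 1))
            / s ^ (2 * H - 2) * s ^ (2 * H - 2)| := by rw [div_mul_cancel₀ _ hd]
      _ = |(fouCorr H s - s ^ (2 * H - 2) / Real.Gamma (2 * H - 1))
            / s ^ (2 * H - 2)| * |s ^ (2 * H - 2)| := abs_mul _ _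
      _ ≤ c * |s ^ (2 * H - 2)| := mul_le_mul_of_nonneg_right hratio.le (abs_nonneg _)
  refine ⟨hlittle, ?_⟩
  have hcont := fou_aux_continuous hH0 hH1
  have hbig : (fouCorr H) =O[atTop] fun s : ℝ => s ^ (2 * H - 2) := by
    have hb1 := hlittle.isBigO
    have hb2 : (fun s : ℝ => s ^ (2 * H - 2) / Real.Gamma (2 * H - 1))
        =O[atTop] (fun s : ℝ => s ^ (2 * H - 2)) := by
      simp_rw [div_eq_mul_inv]
      exact (isBigO_refl (fun s : ℝ => s ^ (2 * H - 2)) atTop).mul (isBigO_const_const _ (by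
        exact one_ne_zero) _).norm_norm.of_norm_norm |>.trans (by
          simpa using (isBigO_refl (fun s : ℝ => s ^ (2 * H - 2)) atTop))
    have hsum := hb1.add hb2
    have heq : (fun s : ℝ => (fouCorr H s - s ^ (2 * H - 2) / Real.Gamma (2 * H - 1))
        + s ^ (2 * H - 2) / Real.Gamma (2 * H - 1)) = fouCorr H := funext fun s => by ring
    rwa [heq] at hsum
  obtain ⟨C, hC⟩ := hbig.bound
  obtain ⟨s₀, hs₀⟩ := eventually_atTop.mp hC
  set t₀ := max s₀ 1 with ht₀def
  have ht₀ : (0:ℝ) < t₀ := lt_of_lt_of_le one_pos (le_max_right _ _)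
  have htail : IntegrableOn (fouCorr H) (Ioi t₀) := by
    have hint : IntegrableOn (fun s : ℝ => C * s ^ (2 * H - 2)) (Ioi t₀) :=
      (integrableOn_Ioi_rpow_of_lt (by linarith : 2 * H - 2 < -1) ht₀).const_mul C
    refine Integrable.mono' hint (hcont.aestronglyMeasurable.restrict) ?_
    rw [ae_restrict_iff' measurableSet_Ioi]
    refine ae_of_all _ (fun s hs => ?_)
    have hst : t₀ < s := hs
    have hs0 : (0:ℝ) < s := lt_trans ht₀ hst
    have hb := hs₀ s (le_trans (le_max_left _ _) hst.le)
    calc ‖fouCorr H s‖ ≤ C * ‖s ^ (2 * H - 2)‖ := hb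
      _ = C * s ^ (2 * H - 2) := by
          rw [Real.norm_eq_abs, abs_of_pos (Real.rpow_pos_of_pos hs0 _)]
  have hhead : IntegrableOn (fouCorr H) (Ioc 0 t₀) := hcont.integrableOn_Ioc
  rw [← Ioc_union_Ioi_eq_Ioi ht₀.le]
  exact hhead.union htail
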